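/- Let Γ be a circle with chord BC, and let ω be a circle internally tangent to Γ at P and tangent to line BC at E, on a given side of BC. Let M be the midpoint of the arc BC of Γ on the opposite side of BC from ω. Then line MB is tangent at B to the circumcircle of triangle BEP, and hence MB² = ME · MP. -/

import Mathlib

open EuclideanGeometry Metric AffineSubspace Real RealInnerProductSpace

noncomputable section

/-- The Euclidean plane. -/
abbrev Pt := EuclideanSpace ℝ (Fin 2)

/-- The line through two points. -/
def lineTh (A B : Pt) : AffineSubspace ℝ Pt := affineSpan ℝ {A, B}

/-- The circle with center `O` and radius `r` is tangent to the line `AB` at the point `E`. -/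
def TangentAt (O : Pt) (r : ℝ) (A B E : Pt) : Prop :=
  E ∈ lineTh A B ∧ dist O E = r ∧ ∀ Q ∈ lineTh A B, r ≤ dist O Q

/-- `I` is the incenter of triangle `ABC`: it lies strictly inside the triangle and is
equidistant from the three side lines. -/
def IsIncenter (I A B C : Pt) : Prop :=
  (lineTh B C).SSameSide I A ∧ (lineTh C A).SSameSide I B ∧ (lineTh A B).SSameSide I C ∧
  infDist I (lineTh B C : Set Pt) = infDist I (lineTh C A : Set Pt) ∧
  infDist I (lineTh C A : Set Pt) = infDist I (lineTh A B : Set Pt)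

/-- `J` is the excenter of triangle `ABC` opposite the vertex `C`. -/
def IsExcenterC (J A B C : Pt) : Prop :=
  (lineTh A B).SOppSide J C ∧ (lineTh C B).SSameSide J A ∧ (lineTh C A).SSameSide J B ∧
  infDist J (lineTh B C : Set Pt) = infDist J (lineTh C A : Set Pt) ∧
  infDist J (lineTh C A : Set Pt) = infDist J (lineTh A B : Set Pt)

lemma dist_sq' (X Y : Pt) : dist X Y ^ 2 = (X 0 - Y 0)^2 + (X 1 - Y 1)^2 := by
  rw [EuclideanSpace.dist_eq, sq_sqrt (by positivity)]
  simp [Fin.sum_univ_two, Real.dist_eq, sq_abs]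

lemma inner_eq' (u w : Pt) : (inner ℝ u w : ℝ) = u 0 * w 0 + u 1 * w 1 := by
  simp [PiLp.inner_apply, Fin.sum_univ_two]
  ring

lemma mem_lineTh_iff {X A B : Pt} : X ∈ lineTh A B ↔ ∃ t : ℝ, X = t • (B - A) + A := by
  unfold lineTh
  constructor
  · intro h
    have := (vadd_left_mem_affineSpan_pair (k := ℝ) (v := X -ᵥ A) (p₁ := A) (p₂ := B)).mp
      (by simpa using h)
    obtain ⟨t, ht⟩ := this
    refine ⟨t, ?_⟩
    rw [vsub_eq_sub] at ht
    rw [ht]; simp [vsub_eq_sub]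
  · rintro ⟨t, rfl⟩
    have := AffineMap.lineMap_mem_affineSpan_pair (k := ℝ) t A B
    simpa [AffineMap.lineMap_apply, vsub_eq_sub, vadd_eq_add] using this

lemma frame_dist (v0 v1 : ℝ) (hv : v0^2 + v1^2 = 1) (B X Y : Pt) :
    dist X Y ^ 2 =
      (((X 0 - B 0)*v0 + (X 1 - B 1)*v1) - ((Y 0 - B 0)*v0 + (Y 1 - B 1)*v1))^2
      + ((-(X 0 - B 0)*v1 + (X 1 - B 1)*v0) - (-(Y 0 - B 0)*v1 + (Y 1 - B 1)*v0))^2 := by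
  rw [dist_sq']
  linear_combination (-((X 0 - Y 0)^2 + (X 1 - Y 1)^2)) * hv

lemma frame_inner (v0 v1 : ℝ) (hv : v0^2 + v1^2 = 1) (u w : Pt) :
    (inner ℝ u w : ℝ) =
      ((u 0)*v0 + (u 1)*v1)*((w 0)*v0 + (w 1)*v1)
      + (-(u 0)*v1 + (u 1)*v0)*(-(w 0)*v1 + (w 1)*v0) := by
  rw [inner_eq']
  linear_combination (-(u 0 * w 0 + u 1 * w 1)) * hv

set_option maxHeartbeats 1000000 in
lemma core (c xO yO xM yM e s px py r R : ℝ)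
    (hc : 0 < c) (hr : 0 < r) (hrR : r < R)
    (hO1 : xO^2 + yO^2 = R^2)
    (hO2 : (xO - c)^2 + yO^2 = R^2)
    (hM1 : xM^2 + yM^2 = (xM - c)^2 + yM^2)
    (hOM : (xM - xO)^2 + (yM - yO)^2 = R^2)
    (hWO : (e - xO)^2 + (s - yO)^2 = (R - r)^2)
    (hs2 : s^2 = r^2)
    (hside : yM * s < 0)
    (hPW : (e - px)^2 + (s - py)^2 = r^2)
    (hPO : (px - xO)^2 + (py - yO)^2 = R^2) :
    (∀ X Y Rp : ℝ, X^2 + Y^2 = Rp^2 → (X - e)^2 + Y^2 = Rp^2 →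
        (X - px)^2 + (Y - py)^2 = Rp^2 → X*xM + Y*yM = 0) ∧
    (R - r) * (xM^2 + yM^2) = R * ((xM - e)^2 + yM^2) ∧
    (R - r)^2 * ((xM - px)^2 + (yM - py)^2) = R^2 * ((xM - e)^2 + yM^2) := by
  have hR : 0 < R := hr.trans hrR
  have hD : 0 < R - r := by linarith
  have hcne : c ≠ 0 := ne_of_gt hc
  have hq : xO = c / 2 := by
    have h := (mul_eq_zero.mp
      (show c * (2*xO - c) = 0 by linear_combination hO1 - hO2)).resolve_left hcne
    linarith
  have hqM : xM = c / 2 := by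
    have h := (mul_eq_zero.mp
      (show c * (2*xM - c) = 0 by linear_combination hM1)).resolve_left hcne
    linarith
  subst hq hqM
  have hc4 : 0 < (c/2)^2 := by positivity
  have hyO : yO^2 < R^2 := by linarith [hO1]
  have hyO1 : yO < R := by nlinarith [hyO]
  have hyO2 : -R < yO := by nlinarith [hyO]
  have hAB : ((R - r)*(px - c/2) - R*(e - c/2))^2 + ((R - r)*(py - yO) - R*(s - yO))^2 = 0 := by
    linear_combination ((R-r)^2 - R*(R-r)) * hPO + (R^2 - R*(R-r)) * hWO + (R*(R-r)) * hPW
  have hA : (R - r)*(px - c/2) - R*(e - c/2) = 0 := by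
    have h2 : ((R - r)*(px - c/2) - R*(e - c/2))^2 = 0 :=
      le_antisymm (by linarith [sq_nonneg ((R - r)*(py - yO) - R*(s - yO))]) (sq_nonneg _)
    exact pow_eq_zero_iff two_ne_zero |>.mp h2
  have hB : (R - r)*(py - yO) - R*(s - yO) = 0 := by
    have h2 : ((R - r)*(py - yO) - R*(s - yO))^2 = 0 :=
      le_antisymm (by linarith [sq_nonneg ((R - r)*(px - c/2) - R*(e - c/2))]) (sq_nonneg _)
    exact pow_eq_zero_iff two_ne_zero |>.mp h2
  obtain ⟨σ, hσ, hsσ, hmσ⟩ : ∃ σ : ℝ, σ^2 = 1 ∧ s = σ * r ∧ yM = yO - σ * R := by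
    have hss : s = r ∨ s = -r := by
      rcases mul_eq_zero.mp (show (s - r)*(s + r) = 0 by linear_combination hs2) with h | h
      · exact Or.inl (by linarith)
      · exact Or.inr (by linarith)
    have hmm : yM = yO + R ∨ yM = yO - R := by
      have h2 : (yM - yO)^2 = R^2 := by linear_combination hOM
      rcases mul_eq_zero.mp (show (yM - yO - R)*(yM - yO + R) = 0 by linear_combination h2)
        with h | h
      · exact Or.inl (by linarith)
      · exact Or.inr (by linarith)
    rcases hss with h1 | h1 <;> rcases hmm with h2 | h2
    · exfalso
      have := mul_pos (show (0:ℝ) < yM by linarith) hr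
      rw [h1] at hside; linarith
    · exact ⟨1, by norm_num, by linarith, by linarith⟩
    · exact ⟨-1, by norm_num, by linarith, by linarith⟩
    · exfalso
      have := mul_pos (show (0:ℝ) < -yM by linarith) hr
      rw [h1] at hside; nlinarith
  subst hsσ hmσ
  have h3 : (R - r)*px = R*e - r*(c/2) := by linear_combination hA
  have h4 : (R - r)*py = -(r*(yO - σ*R)) := by linear_combination hB
  have h5 : R*e^2*(R - r) = (R*e - r*(c/2))^2 + r^2*(yO - σ*R)^2 := by
    linear_combination (-(R*r)) * hWO + r*(R-r) * hO1 - R*r^2*(R-r) * hσ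
  refine ⟨?_, ?_, ?_⟩
  · intro X Y Rp g1 g2 g3
    have h1 : 2*e*X = e^2 := by linear_combination g1 - g2
    have h2 : 2*px*X + 2*py*Y = px^2 + py^2 := by linear_combination g1 - g3
    have H : 2*r*(R-r)^2*(X*(c/2) + Y*(yO - σ*R)) = 0 := by
      linear_combination (R*(R-r)^2) * h1 - (R-r)^3 * h2
        + (2*(R-r)^2*X - (R-r)*((R-r)*px + R*e - r*(c/2))) * h3
        + (2*(R-r)^2*Y - (R-r)*((R-r)*py - r*(yO - σ*R))) * h4 + (R-r) * h5
    have hne : (2*r*(R-r)^2) ≠ 0 := by positivity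
    exact (mul_eq_zero.mp H).resolve_left hne
  · linear_combination (R - r) * hO1 - R * hWO - r*R*(R-r) * hσ
  · linear_combination (-((R-r)*(c/2 - px) + R*(c/2 - e))) * hA
      + (-((R-r)*((yO - σ*R) - py) + R*(yO - σ*R))) * hB

set_option maxHeartbeats 4000000 in
/-- `MB` is tangent at `B` to the circumcircle of `BEP`, hence `MB² = ME·MP`. -/
theorem tangent_and_power (O B C W P E M : Pt) (R r : ℝ)
    (hBC : B ≠ C)
    (hOB : dist O B = R) (hOC : dist O C = R)
    (hr : 0 < r) (hrR : r < R)
    (hP₁ : dist W P = r) (hP₂ : dist O P = R) (hP₃ : dist W O = R - r)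
    (hE : TangentAt W r B C E)
    (hM : dist O M = R) (hMB : dist M B = dist M C)
    (hMside : (lineTh B C).SOppSide M W) :
    (∀ (O' : Pt) (R' : ℝ), dist O' B = R' → dist O' E = R' → dist O' P = R' →
      (inner ℝ (B - O') (M - B) : ℝ) = 0) ∧
    dist M B ^ 2 = dist M E * dist M P := by
  obtain ⟨c, hcdef⟩ : ∃ z : ℝ, z = dist B C := ⟨_, rfl⟩
  have hc : 0 < c := by rw [hcdef]; exact dist_pos.mpr hBC
  have hcne : c ≠ 0 := ne_of_gt hc
  have hcsq : c^2 = (B 0 - C 0)^2 + (B 1 - C 1)^2 := by rw [hcdef]; exact dist_sq' B C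
  obtain ⟨v0, hv0⟩ : ∃ z : ℝ, z = (C 0 - B 0)/c := ⟨_, rfl⟩
  obtain ⟨v1, hv1⟩ : ∃ z : ℝ, z = (C 1 - B 1)/c := ⟨_, rfl⟩
  have hv : v0^2 + v1^2 = 1 := by
    rw [hv0, hv1]; field_simp; linear_combination -hcsq
  have hxC : (C 0 - B 0)*v0 + (C 1 - B 1)*v1 = c := by
    rw [hv0, hv1]; field_simp; linear_combination -hcsq
  have hyC : -(C 0 - B 0)*v1 + (C 1 - B 1)*v0 = 0 := by
    rw [hv0, hv1]; ring
  obtain ⟨xO, hxO⟩ : ∃ z : ℝ, z = (O 0 - B 0)*v0 + (O 1 - B 1)*v1 := ⟨_, rfl⟩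
  obtain ⟨yO, hyO⟩ : ∃ z : ℝ, z = -(O 0 - B 0)*v1 + (O 1 - B 1)*v0 := ⟨_, rfl⟩
  obtain ⟨xM, hxM⟩ : ∃ z : ℝ, z = (M 0 - B 0)*v0 + (M 1 - B 1)*v1 := ⟨_, rfl⟩
  obtain ⟨yM, hyM⟩ : ∃ z : ℝ, z = -(M 0 - B 0)*v1 + (M 1 - B 1)*v0 := ⟨_, rfl⟩
  obtain ⟨xW, hxW⟩ : ∃ z : ℝ, z = (W 0 - B 0)*v0 + (W 1 - B 1)*v1 := ⟨_, rfl⟩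
  obtain ⟨yW, hyW⟩ : ∃ z : ℝ, z = -(W 0 - B 0)*v1 + (W 1 - B 1)*v0 := ⟨_, rfl⟩
  obtain ⟨xP, hxP⟩ : ∃ z : ℝ, z = (P 0 - B 0)*v0 + (P 1 - B 1)*v1 := ⟨_, rfl⟩
  obtain ⟨yP, hyP⟩ : ∃ z : ℝ, z = -(P 0 - B 0)*v1 + (P 1 - B 1)*v0 := ⟨_, rfl⟩
  obtain ⟨xE, hxE⟩ : ∃ z : ℝ, z = (E 0 - B 0)*v0 + (E 1 - B 1)*v1 := ⟨_, rfl⟩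
  obtain ⟨yE, hyE⟩ : ∃ z : ℝ, z = -(E 0 - B 0)*v1 + (E 1 - B 1)*v0 := ⟨_, rfl⟩
  -- basic circle equations
  have eO1 : xO^2 + yO^2 = R^2 := by
    have h := frame_dist v0 v1 hv B O B
    rw [hOB] at h
    rw [hxO, hyO]; linear_combination -h
  have eO2 : (xO - c)^2 + yO^2 = R^2 := by
    have h := frame_dist v0 v1 hv B O C
    rw [hOC, hxC, hyC] at h
    rw [hxO, hyO]; linear_combination -h
  have eM1 : xM^2 + yM^2 = (xM - c)^2 + yM^2 := by
    have h1 := frame_dist v0 v1 hv B M B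
    have h2 := frame_dist v0 v1 hv B M C
    rw [hMB] at h1
    rw [hxC, hyC] at h2
    rw [hxM, hyM]; linear_combination h2 - h1
  have eOM : (xM - xO)^2 + (yM - yO)^2 = R^2 := by
    have h := frame_dist v0 v1 hv B M O
    rw [dist_comm M O, hM] at h
    rw [hxM, hyM, hxO, hyO]; linear_combination -h
  have eWO : (xW - xO)^2 + (yW - yO)^2 = (R - r)^2 := by
    have h := frame_dist v0 v1 hv B W O
    rw [hP₃] at h
    rw [hxW, hyW, hxO, hyO]; linear_combination -h
  -- E on the line BC
  obtain ⟨t, hEt⟩ := mem_lineTh_iff.mp hE.1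
  have hE0 : E 0 = t * (C 0 - B 0) + B 0 := by rw [hEt]; rfl
  have hE1 : E 1 = t * (C 1 - B 1) + B 1 := by rw [hEt]; rfl
  have hyE0 : yE = 0 := by
    rw [hyE, hE0, hE1]; linear_combination t * hyC
  have hxEt : xE = t * c := by
    rw [hxE, hE0, hE1]; linear_combination t * hxC
  -- tangency: foot of perpendicular
  have eWE : (xW - xE)^2 + (yW - yE)^2 = r^2 := by
    have h := frame_dist v0 v1 hv B W E
    rw [hE.2.1] at h
    rw [hxW, hyW, hxE, hyE]; linear_combination -h
  have hxWE : xW = xE := by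
    obtain ⟨u, hu⟩ : ∃ z : ℝ, z = (xW - xE)/c := ⟨_, rfl⟩
    have hQle : r ≤ dist W ((t + u) • (C - B) + B) := hE.2.2 _ (mem_lineTh_iff.mpr ⟨t + u, rfl⟩)
    have hQ2 : r^2 ≤ dist W ((t + u) • (C - B) + B)^2 :=
      pow_le_pow_left₀ hr.le hQle 2
    have hdWQ : dist W ((t + u) • (C - B) + B)^2 = (xW - (t+u)*c)^2 + yW^2 := by
      have h := frame_dist v0 v1 hv B W ((t + u) • (C - B) + B)
      have hQ0 : ((t + u) • (C - B) + B) 0 = (t+u) * (C 0 - B 0) + B 0 := rfl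
      have hQ1 : ((t + u) • (C - B) + B) 1 = (t+u) * (C 1 - B 1) + B 1 := rfl
      rw [hxW, hyW, h, hQ0, hQ1]
      linear_combination ((t+u)^2*((C 0 - B 0)*v0 + (C 1 - B 1)*v1 + c)
          - 2*(t+u)*((W 0 - B 0)*v0 + (W 1 - B 1)*v1)) * hxC
        + ((t+u)^2*(-(C 0 - B 0)*v1 + (C 1 - B 1)*v0)
          - 2*(t+u)*(-(W 0 - B 0)*v1 + (W 1 - B 1)*v0)) * hyC
    have huc : u * c = xW - xE := by rw [hu]; field_simp
    have h0 : xW - (t+u)*c = 0 := by linear_combination hxEt - huc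
    have h00 : (xW - (t+u)*c)^2 = 0 := by rw [h0]; ring
    have hy2 : r^2 ≤ yW^2 := by rw [hdWQ] at hQ2; linarith
    have hxx : (xW - xE)^2 ≤ 0 := by
      have h9 := eWE; rw [hyE0] at h9
      have h8 : (yW - 0)^2 = yW^2 := by ring
      rw [h8] at h9; linarith
    have : (xW - xE)^2 = 0 := le_antisymm hxx (sq_nonneg _)
    have := pow_eq_zero_iff two_ne_zero |>.mp this
    linarith [this]
  have es2 : yW^2 = r^2 := by
    have h := eWE; rw [hyE0, hxWE] at h; linear_combination h
  have eWO' : (xE - xO)^2 + (yW - yO)^2 = (R - r)^2 := by rw [← hxWE]; exact eWO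
  have ePW' : (xE - xP)^2 + (yW - yP)^2 = r^2 := by
    have h := frame_dist v0 v1 hv B W P
    rw [hP₁] at h
    rw [← hxWE, hxW, hyW, hxP, hyP]; linear_combination -h
  have ePO : (xP - xO)^2 + (yP - yO)^2 = R^2 := by
    have h := frame_dist v0 v1 hv B P O
    rw [dist_comm P O, hP₂] at h
    rw [hxP, hyP, hxO, hyO]; linear_combination -h
  -- side condition
  obtain ⟨⟨p₁, hp₁, p₂, hp₂, hray⟩, hMnot, hWnot⟩ := hMside
  have hyline : ∀ p : Pt, p ∈ lineTh B C → -(p 0 - B 0)*v1 + (p 1 - B 1)*v0 = 0 := by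
    intro p hp
    obtain ⟨tp, rfl⟩ := mem_lineTh_iff.mp hp
    have h0 : (tp • (C - B) + B) 0 = tp * (C 0 - B 0) + B 0 := rfl
    have h1 : (tp • (C - B) + B) 1 = tp * (C 1 - B 1) + B 1 := rfl
    rw [h0, h1]; linear_combination tp * hyC
  have hs0 : yW ≠ 0 := by
    intro h
    apply hWnot
    have hyWraw : (W 1 - B 1)*(C 0 - B 0) = (W 0 - B 0)*(C 1 - B 1) := by
      have h2 : -(W 0 - B 0)*v1 + (W 1 - B 1)*v0 = 0 := by rw [← hyW]; exact h
      rw [hv0, hv1] at h2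
      field_simp at h2
      linarith [h2]
    apply mem_lineTh_iff.mpr ⟨((W 0 - B 0)*v0 + (W 1 - B 1)*v1)/c, ?_⟩
    refine PiLp.ext fun i => ?_
    fin_cases i
    · show W 0 = ((W 0 - B 0)*v0 + (W 1 - B 1)*v1)/c * (C 0 - B 0) + B 0
      rw [hv0, hv1]; field_simp
      linear_combination (-(C 1 - B 1)) * hyWraw + (W 0 - B 0) * hcsq
    · show W 1 = ((W 0 - B 0)*v0 + (W 1 - B 1)*v1)/c * (C 1 - B 1) + B 1
      rw [hv0, hv1]; field_simp
      linear_combination (C 0 - B 0) * hyWraw + (W 1 - B 1) * hcsq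
  have hsideM : yM * yW < 0 := by
    rcases hray with h | h | ⟨a, b, ha, hb, hab⟩
    · exact absurd (vsub_eq_zero_iff_eq.mp h ▸ hp₁) hMnot
    · exact absurd ((vsub_eq_zero_iff_eq.mp h).symm ▸ hp₂) hWnot
    · have hab0 : a * (M 0 - p₁ 0) = b * (p₂ 0 - W 0) := by
        have h' := congrArg (fun z : Pt => z 0) hab
        simpa [vsub_eq_sub] using h'
      have hab1 : a * (M 1 - p₁ 1) = b * (p₂ 1 - W 1) := by
        have h' := congrArg (fun z : Pt => z 1) hab
        simpa [vsub_eq_sub] using h'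
      have hy1 := hyline p₁ hp₁
      have hy2 := hyline p₂ hp₂
      have hys : a * yM = -(b * yW) := by
        rw [hyM, hyW]
        linear_combination (-v1)*hab0 + v0*hab1 + a*hy1 + b*hy2
      have hsq : 0 < yW^2 := (sq_nonneg yW).lt_of_ne ((pow_ne_zero 2 hs0).symm)
      have h1 : a * (yM * yW) = -(b * yW^2) := by linear_combination yW * hys
      by_contra hcon
      push_neg at hcon
      have h2' := mul_nonneg ha.le hcon
      linarith [mul_pos hb hsq]
  -- apply the scalar core lemma
  obtain ⟨hTan, hII, hIII⟩ := core c xO yO xM yM xE yW xP yP r R hc hr hrR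
    eO1 eO2 eM1 eOM eWO' es2 hsideM ePW' ePO
  constructor
  · intro O' R' g1 g2 g3
    have d1 : ((O' 0 - B 0)*v0 + (O' 1 - B 1)*v1)^2
        + (-(O' 0 - B 0)*v1 + (O' 1 - B 1)*v0)^2 = R'^2 := by
      have h := frame_dist v0 v1 hv B O' B
      rw [g1] at h
      linear_combination -h
    have hyE0' : -(E 0 - B 0)*v1 + (E 1 - B 1)*v0 = 0 := by rw [← hyE]; exact hyE0
    have d2 : ((O' 0 - B 0)*v0 + (O' 1 - B 1)*v1 - xE)^2
        + (-(O' 0 - B 0)*v1 + (O' 1 - B 1)*v0)^2 = R'^2 := by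
      have h := frame_dist v0 v1 hv B O' E
      rw [g2] at h
      rw [hxE]
      linear_combination -h + (2*(-(O' 0 - B 0)*v1 + (O' 1 - B 1)*v0)
        - (-(E 0 - B 0)*v1 + (E 1 - B 1)*v0)) * hyE0'
    have d3 : ((O' 0 - B 0)*v0 + (O' 1 - B 1)*v1 - xP)^2
        + (-(O' 0 - B 0)*v1 + (O' 1 - B 1)*v0 - yP)^2 = R'^2 := by
      have h := frame_dist v0 v1 hv B O' P
      rw [g3] at h
      rw [hxP, hyP]
      linear_combination -h
    have h0 := hTan _ _ R' d1 d2 d3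
    rw [hxM, hyM] at h0
    rw [frame_inner v0 v1 hv]
    simp only [PiLp.sub_apply]
    linear_combination -h0
  · have dMB : dist M B ^ 2 = xM^2 + yM^2 := by
      rw [hxM, hyM, frame_dist v0 v1 hv B M B]; ring
    have hyE0' : -(E 0 - B 0)*v1 + (E 1 - B 1)*v0 = 0 := by rw [← hyE]; exact hyE0
    have dME : dist M E ^ 2 = (xM - xE)^2 + yM^2 := by
      rw [hxM, hyM, hxE, frame_dist v0 v1 hv B M E]
      linear_combination ((-(E 0 - B 0)*v1 + (E 1 - B 1)*v0)
        - 2*(-(M 0 - B 0)*v1 + (M 1 - B 1)*v0)) * hyE0'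
    have dMP : dist M P ^ 2 = (xM - xP)^2 + (yM - yP)^2 := by
      rw [hxM, hyM, hxP, hyP, frame_dist v0 v1 hv B M P]
    have hDpos : (0:ℝ) < R - r := by linarith
    have hbb : (dist M P * (R - r))^2 = (R * dist M E)^2 := by
      rw [mul_pow, mul_pow, dMP, dME]
      linear_combination hIII
    have hba : dist M P * (R - r) = R * dist M E :=
      (sq_eq_sq₀ (mul_nonneg dist_nonneg hDpos.le)
        (mul_nonneg (by linarith) dist_nonneg)).mp hbb
    have hfin : dist M B ^ 2 * (R - r) = (dist M E * dist M P) * (R - r) := by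
      have hL : dist M B ^ 2 * (R - r) = R * dist M E ^ 2 := by
        rw [dMB, dME]; linear_combination hII
      calc dist M B ^ 2 * (R - r) = R * dist M E ^ 2 := hL
        _ = dist M E * (dist M P * (R - r)) := by rw [hba]; ring
        _ = (dist M E * dist M P) * (R - r) := by ring
    exact mul_right_cancel₀ (ne_of_gt hDpos) hfin
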